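/- Let E″ be the state with ℓ(E″) = 2k+1 and entries a_0(E″) = 2^{2k+1} − 4, a_1(E″) = 3·2^{2k}, a_j(E″) = 3·2^{2k−j+1} − 2 + 2·(j mod 2) for j ∈ [2, 2k], a_{2k+1}(E″) = 2. Then E″ ↦ E_{k,final}, where E_{k,final} = (0, 2, 2, 2^3, 2^4 − 2, 2^5, 2^6 − 2, …, 2^{2k−1}, 2^{2k} − 2, 2^{2k+1}, 2^{2k+2} − 4, 0), and the sequence of rules E″ → E_{k,final} consists, in order, of one Zero rule, 2^{2k+1} − 4 Increment rules, one Halve rule, 2^{2k+2} − 2 Increment rules, and one Overflow rule. -/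

import Mathlib

open scoped Classical

namespace Skelet17

/-- The five kinds of transition rules. -/
inductive Rule
  | overflow | halt | zero | halve | increment
  deriving DecidableEq

/-- A state `(a_ℓ, …, a_1, a_0)` (written left to right, `a_0` rightmost) is stored
as the list `[a_0, a_1, …, a_ℓ]`, i.e. with the *rightmost* entry first. -/
abbrev State := List ℤ

/-- The leftmost entry `a_ℓ` of a state. -/
def leftmost (S : State) : ℤ := S.getLastD 0

/-- The entry `a_i(S)`. -/
def entry (S : State) (i : ℕ) : ℤ := S.getD i 0

/-- `ℓ(S) = |S| - 1`. -/
def ell (S : State) : ℕ := S.length - 1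

/-- The Overflow rule applies: the leftmost entry is odd and all other entries are even. -/
def OverflowCond (S : State) : Prop := Odd (leftmost S) ∧ ∀ x ∈ S.dropLast, Even x

/-- The Halt rule applies: all entries are even and the two leftmost entries are `0`. -/
def HaltCond (S : State) : Prop :=
  (∀ x ∈ S, Even x) ∧ S.getLastD 1 = 0 ∧ S.dropLast.getLastD 1 = 0

/-- The Zero rule applies: all entries are even and the Halt rule does not apply. -/
def ZeroCond (S : State) : Prop := (∀ x ∈ S, Even x) ∧ ¬ HaltCond S

/-- The Halve rule applies: `a_0 = -1` and none of the earlier rules applies. -/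
def HalveCond (S : State) : Prop :=
  ¬ OverflowCond S ∧ ¬ HaltCond S ∧ ¬ ZeroCond S ∧ S.headD 0 = -1

/-- The rule applied to a state (the first matching rule). -/
noncomputable def ruleOf (S : State) : Rule :=
  if OverflowCond S then .overflow
  else if HaltCond S then .halt
  else if ZeroCond S then .zero
  else if S.headD 0 = -1 then .halve
  else .increment

/-- The transition function `P`.  (On a Halt state the process stops; we set `P S = S` there.)
Recall the list stores `a_0` first, so e.g. the Overflow rule
`(2a_ℓ+1, 2a_{ℓ-1}, …, 2a_0) ↦ (0, 2a_ℓ+2, 2a_{ℓ-1}, …, 2a_0)` appends a `0` at the end of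
the list and adds `1` to the previously last element. -/
noncomputable def P (S : State) : State :=
  match ruleOf S with
  | .overflow => S.dropLast ++ [leftmost S + 1, 0]
  | .halt => S
  | .zero => (S.set 0 (S.headD 0 - 1)).set (S.length - 1) (leftmost S + 1) ++ [0, 0]
  | .halve => S.tail
  | .increment =>
      let i := S.findIdx (fun x => x % 2 != 0)   -- index of the rightmost odd entry
      (S.set (i + 1) (S.getD (i + 1) 0 + 1)).set 0 (S.headD 0 - 1)

/-- `S ↦ T` : some iterate of `P` sends `S` to `T`. -/
def Reaches (S T : State) : Prop := ∃ m : ℕ, P^[m] S = T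

/-- `σ(S) = +1` if the sum of the entries is odd, `-1` if it is even. -/
noncomputable def sigma (S : State) : ℤ := if Odd S.sum then 1 else -1

/-- `n(S)`: the natural number whose Gray code digits (least significant first) are
`a_1 mod 2, a_2 mod 2, …, a_ℓ mod 2`.  Equivalently (standard Gray-code decoding),
bit `i` of `n(S)` is the parity of `a_{i+1} + ⋯ + a_ℓ`. -/
def nOf (S : State) : ℕ :=
  ∑ i ∈ Finset.range (ell S),
    2 ^ i * ((∑ j ∈ Finset.Icc (i + 1) (ell S), entry S j) % 2).toNat

/-- `⟨a / 2^j⟩` : the nearest integer to `a / 2^j`, rounding half-integers up. -/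
def nearest (j a : ℕ) : ℕ := (2 * a + 2 ^ j) / 2 ^ (j + 1)

/-- `d_j(a, b) = |⟨a/2^j⟩ - ⟨b/2^j⟩|`. -/
def dd (j a b : ℕ) : ℕ := Nat.dist (nearest j a) (nearest j b)

/-- `S_k = (0, 2, 2^2, …, 2^{2k}, 0)`. -/
def Sk (k : ℕ) : State :=
  0 :: (((List.range (2 * k)).map fun i => (2 : ℤ) ^ (2 * k - i)) ++ [0])

/-- An empty state: `n(E) = 0`, `σ(E) = -1`, and the next rule applied is not Halt. -/
def IsEmptyState (E : State) : Prop :=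
  E ≠ [] ∧ nOf E = 0 ∧ sigma E = -1 ∧ ruleOf E ≠ Rule.halt

/-- `m` is the first positive time at which the trajectory of `E` is at an empty state. -/
def NextEmptyAt (E : State) (m : ℕ) : Prop :=
  0 < m ∧ IsEmptyState (P^[m] E) ∧ ∀ t, 0 < t → t < m → ¬ IsEmptyState (P^[t] E)

/-- `N(E)` : the next empty state after `E` (junk value `[]` if it does not exist). -/
noncomputable def N (E : State) : State :=
  if h : ∃ m, NextEmptyAt E m then P^[h.choose] E else []

/-- The rule applied at time `j` belongs to `T_E`, the sequence of rules from `E` to the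
next empty state after `E` (all rules after `E` when no next empty state exists). -/
def InTE (E : State) (j : ℕ) : Prop := ∀ t, 0 < t → t ≤ j → ¬ IsEmptyState (P^[t] E)

/-- Weakly embanked: `T_E` consists of one Zero rule at the start and contains at least two
Halve rules, and all other rules before the second Halve rule are Increment rules. -/
def WeaklyEmbanked (E : State) : Prop :=
  IsEmptyState E ∧
  ∃ j₁ j₂, 0 < j₁ ∧ j₁ < j₂ ∧ InTE E j₂ ∧
    ruleOf (P^[j₁] E) = Rule.halve ∧ ruleOf (P^[j₂] E) = Rule.halve ∧
    ∀ t, 0 < t → t < j₂ → t ≠ j₁ → ruleOf (P^[t] E) = Rule.increment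

/-- Embanked: the next empty state `N(E)` exists and the non-Increment rules of `T_E` consist
of exactly one Zero rule at the start and exactly two Halve rules elsewhere. -/
def Embanked (E : State) : Prop :=
  IsEmptyState E ∧
  ∃ m j₁ j₂, NextEmptyAt E m ∧ 0 < j₁ ∧ j₁ < j₂ ∧ j₂ < m ∧
    ruleOf (P^[j₁] E) = Rule.halve ∧ ruleOf (P^[j₂] E) = Rule.halve ∧
    ∀ t, 0 < t → t < m → t ≠ j₁ → t ≠ j₂ → ruleOf (P^[t] E) = Rule.increment

/-- `h_i(E)` (`i ∈ {1,2}`): the value of `n` at the state immediately *after* the `i`-th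
Halve rule applied after `E`. -/
noncomputable def hVal (E : State) (i : ℕ) : ℕ :=
  nOf (P^[Nat.nth (fun j => ruleOf (P^[j] E) = Rule.halve) (i - 1) + 1] E)

/-- `s_i(E)` (`i ∈ {1,2}`): the value of `n` at the state immediately *before* the `i`-th
Halve rule applied after `E`. -/
noncomputable def sVal (E : State) (i : ℕ) : ℕ :=
  nOf (P^[Nat.nth (fun j => ruleOf (P^[j] E) = Rule.halve) (i - 1)] E)

/-- `E[i]` : the state `E` with the entry `a_i` replaced by `a_i + 2`. -/
def bump (E : State) (i : ℕ) : State := E.set i (E.getD i 0 + 2)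

/-- `N'(E) = N^{⌈(i+1)/2⌉}(E)` for an embanked state `E` with `N(E) = E[i]`
(junk value `E` if no such `i` exists). -/
noncomputable def N' (E : State) : State :=
  if h : ∃ i, i < E.length ∧ N E = bump E i then N^[(h.choose + 2) / 2] E else E

/-- A rooted embanked state: an embanked state obtained from `S_k` by applying `N'`
some number of times. -/
def RootedEmbanked (k : ℕ) (E : State) : Prop :=
  Embanked E ∧ ∃ e : ℕ, N'^[e] (Sk k) = E

/-- `κ_{E→E'}(j)` : the number of steps `S ↦ N(S)` with `N(S) = S[j]` along the chain
`E, N(E), N²(E), …, N^[t](E) = E'`. -/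
noncomputable def kappa (E : State) (t j : ℕ) : ℕ :=
  ((Finset.range t).filter fun s => N (N^[s] E) = bump (N^[s] E) j).card


/-- `E_{k,final} = (0, 2, 2, 2^3, 2^4-2, 2^5, 2^6-2, …, 2^{2k-1}, 2^{2k}-2, 2^{2k+1}, 2^{2k+2}-4, 0)`,
i.e. `a_0 = 0`, `a_1 = 2^{2k+2} - 4`, `a_j = 2^{2k+3-j} - 2·(j mod 2)` for `j ∈ [2, 2k+2]`,
and `a_{2k+3} = 0` (stored rightmost-first). -/
def Efinal (k : ℕ) : State :=
  0 :: ((2 : ℤ) ^ (2 * k + 2) - 4) ::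
    (((List.range (2 * k + 1)).map fun i =>
        (2 : ℤ) ^ (2 * k + 1 - i) - 2 * ((i % 2 : ℕ) : ℤ)) ++ [0])

/-! ### Auxiliary machinery for statement 16 -/

/-- The list `[f 0, f 1, …, f n]`. -/
def mk (n : ℕ) (f : ℕ → ℤ) : State := (List.range (n+1)).map f

lemma mk_length (n : ℕ) (f : ℕ → ℤ) : (mk n f).length = n + 1 := by simp [mk]

lemma mk_getElem (n : ℕ) (f : ℕ → ℤ) (i : ℕ) (h : i < (mk n f).length) :
    (mk n f)[i] = f i := by simp [mk]

lemma mk_getD (n : ℕ) (f : ℕ → ℤ) (i : ℕ) (h : i ≤ n) (d : ℤ) :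
    (mk n f).getD i d = f i := by
  rw [List.getD_eq_getElem?_getD]
  have hi : i < (mk n f).length := by rw [mk_length]; omega
  rw [List.getElem?_eq_getElem hi, mk_getElem]
  rfl

lemma mk_headD (n : ℕ) (f : ℕ → ℤ) (d : ℤ) : (mk n f).headD d = f 0 := by
  rw [mk, List.range_succ_eq_map]; rfl

lemma mk_getLastD (n : ℕ) (f : ℕ → ℤ) (d : ℤ) : (mk n f).getLastD d = f n := by
  rw [List.getLastD_eq_getLast?, List.getLast?_eq_getElem?, mk_length]
  simp only [Nat.add_sub_cancel]
  have hi : n < (mk n f).length := by rw [mk_length]; omega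
  rw [List.getElem?_eq_getElem hi, mk_getElem]
  rfl

lemma mk_dropLast (n : ℕ) (f : ℕ → ℤ) : (mk (n+1) f).dropLast = mk n f := by
  rw [mk, List.range_succ (n := n+1), List.map_append]
  simp only [List.map_cons, List.map_nil]
  rw [List.dropLast_concat, mk]

lemma mk_tail (n : ℕ) (f : ℕ → ℤ) :
    (mk (n+1) f).tail = mk n (fun i => f (i+1)) := by
  rw [mk, List.range_succ_eq_map, List.map_cons, List.tail_cons, mk, List.map_map]
  rfl

lemma mk_mem (n : ℕ) (f : ℕ → ℤ) (i : ℕ) (h : i ≤ n) : f i ∈ mk n f := by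
  simp only [mk, List.mem_map, List.mem_range]
  exact ⟨i, by omega, rfl⟩

lemma mk_set (n : ℕ) (f : ℕ → ℤ) (i : ℕ) (v : ℤ) (h : i ≤ n) :
    (mk n f).set i v = mk n (Function.update f i v) := by
  apply List.ext_getElem (by simp [mk])
  intro j h1 h2
  rw [List.getElem_set, mk_getElem, mk_getElem, Function.update_apply]
  by_cases hij : i = j
  · simp [hij]
  · rw [if_neg hij, if_neg (fun h : j = i => hij h.symm)]

lemma mk_congr (n : ℕ) (f g : ℕ → ℤ) (h : ∀ i ≤ n, f i = g i) : mk n f = mk n g := by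
  rw [mk, mk]
  exact List.map_congr_left (fun a ha => h a (by simpa [Nat.lt_succ_iff] using List.mem_range.mp ha))

/-- `g i M = ⌊(M + 2^(i-1)) / 2^i⌋`, the number of increments entry `i` has received
after `M` steps of an increment run (for `i ≥ 1`). -/
def g (i M : ℕ) : ℕ := (M + 2^(i-1)) / 2^i

lemma g_eval (i M s r : ℕ) (h : M + 2^i = 2^(i+1)*s + r) (hr : r < 2^(i+1)) :
    g (i+1) M = s := by
  unfold g
  simp only [Nat.add_sub_cancel]
  rw [h, Nat.mul_add_div (by positivity), Nat.div_eq_of_lt hr]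
  omega

lemma g_small (i M : ℕ) (h : M + 2^i < 2^(i+1)) : g (i+1) M = 0 :=
  g_eval i M 0 (M + 2^i) (by omega) h

lemma g_zero (i : ℕ) : g (i+1) 0 = 0 := by
  apply g_small
  have h1 : (2:ℕ)^(i+1) = 2^i*2 := pow_succ 2 i
  have h2 : 1 ≤ (2:ℕ)^i := Nat.one_le_two_pow
  omega

lemma g_one_one : g 1 1 = 1 := by decide

lemma g_one (i : ℕ) (hi : 1 ≤ i) : g (i+1) 1 = 0 := by
  apply g_small
  have h1 : (2:ℕ)^(i+1) = 2^i*2 := pow_succ 2 i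
  have h2 : 2 ≤ (2:ℕ)^i := by
    calc (2:ℕ) = 2^1 := rfl
    _ ≤ 2^i := Nat.pow_le_pow_right (by norm_num) hi
  omega

lemma g_eps_zero (i : ℕ) (hi : 2 ≤ i) (ε : ℕ) (hε : ε ≤ 1) : g i ε = 0 := by
  obtain ⟨i', rfl⟩ : ∃ i', i = i' + 1 := ⟨i - 1, by omega⟩
  interval_cases ε
  · exact g_zero i'
  · exact g_one i' (by omega)

lemma dvd_char (i j q M : ℕ) (hM : M + 1 = 2^j * (2*q+1)) :
    2^(i+1) ∣ M + 2^i + 1 ↔ i = j := by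
  constructor
  · intro hd
    by_contra hne
    rcases Nat.lt_or_ge i j with h | h
    · -- i < j
      have h1 : M + 2^i + 1 = 2^j*(2*q+1) + 2^i := by omega
      have h2 : 2^(i+1) ∣ 2^j*(2*q+1) :=
        dvd_mul_of_dvd_left (pow_dvd_pow 2 (by omega)) _
      rw [h1] at hd
      have h3 : 2^(i+1) ∣ 2^i := (Nat.dvd_add_right h2).mp hd
      have h4 := Nat.le_of_dvd (by positivity) h3
      have h5 : (2:ℕ)^(i+1) = 2^i*2 := pow_succ 2 i
      have h6 : 1 ≤ (2:ℕ)^i := Nat.one_le_two_pow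
      omega
    · -- i > j
      have hij : j < i := by omega
      have hpow : (2:ℕ)^j * 2^(i-j) = 2^i := by
        rw [← pow_add]; congr 1; omega
      have h1 : M + 2^i + 1 = 2^j*(2*q+1+2^(i-j)) := by
        rw [Nat.mul_add, hpow]; omega
      have h2 : 2^(j+1) ∣ M + 2^i + 1 := dvd_trans (pow_dvd_pow 2 (by omega)) hd
      rw [h1, pow_succ] at h2
      have h3 : 2 ∣ 2*q+1+2^(i-j) :=
        (Nat.mul_dvd_mul_iff_left (a := 2^j) (by positivity)).mp h2
      have h4 : (2:ℕ) ∣ 2^(i-j) := by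
        have : (2:ℕ)^(i-j) = 2^(i-j-1)*2 := by
          rw [← pow_succ]; congr 1; omega
        exact ⟨2^(i-j-1), by omega⟩
      omega
  · rintro rfl
    refine ⟨q+1, ?_⟩
    have h1 : (2:ℕ)^(i+1) = 2^i*2 := pow_succ 2 i
    have h2 : (2:ℕ)^i*(2*q+1) = 2^i*2*q + 2^i := by ring
    have h3 : (2:ℕ)^(i+1)*(q+1) = 2^i*2*q + 2^i*2 := by rw [h1]; ring
    omega

lemma g_succ (i M j q : ℕ) (hM : M + 1 = 2^j * (2*q+1)) :
    g (i+1) (M+1) = g (i+1) M + if i = j then 1 else 0 := by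
  unfold g
  simp only [Nat.add_sub_cancel]
  have h1 : M + 1 + 2^i = (M + 2^i) + 1 := by omega
  rw [h1, Nat.succ_div]
  congr 1
  rw [if_congr (dvd_char i j q M hM) rfl rfl]

lemma g_even (i M t : ℕ) (hM : M + 1 = 2^(i+2)*t) : Even (g (i+1) M) := by
  have h1 : 1 ≤ (2:ℕ)^i := Nat.one_le_two_pow
  have h2 : (2:ℕ)^(i+1) = 2^i*2 := pow_succ 2 i
  have h3 : (2:ℕ)^(i+2) = 2^i*4 := by rw [pow_succ, pow_succ]; ring
  have h4 : M + 2^i = 2^(i+1)*(2*t) + (2^i - 1) := by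
    have h5 : (2:ℕ)^(i+1)*(2*t) = 2^i*4*t := by rw [h2]; ring
    have h6 : (2:ℕ)^(i+2)*t = 2^i*4*t := by rw [h3]
    omega
  rw [g_eval i M (2*t) (2^i - 1) h4 (by omega)]
  exact ⟨t, by omega⟩

lemma g_odd (i M q : ℕ) (hM : M + 1 = 2^(i+1)*(2*q+1)) : g (i+1) M = 2*q+1 := by
  have h1 : 1 ≤ (2:ℕ)^i := Nat.one_le_two_pow
  have h2 : (2:ℕ)^(i+1) = 2^i*2 := pow_succ 2 i
  apply g_eval i M (2*q+1) (2^i - 1) _ (by omega)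
  have h5 : (2:ℕ)^(i+1)*(2*q+1) = 2^i*(4*q+2) := by rw [h2]; ring
  have h6 : (2:ℕ)^i*(4*q+2) = 2^i*4*q + 2^i*2 := by ring
  have h7 : (2:ℕ)^(i+1)*(2*q+1) = 2^i*4*q + 2^i*2 := by omega
  have h8 : (2:ℕ)^(i+1)*(2*q+1) + (2^i - 1) = 2^i*4*q + 2^i*2 + 2^i - 1 := by omega
  omega

/-- Entry profile during an increment run. -/
def Fb (ε : ℕ) (b : ℕ → ℤ) (m : ℕ) : ℕ → ℤ :=
  fun i => if i = 0 then b 0 - m else b i + ((g i (m + ε) : ℤ) - (g i ε : ℤ))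

lemma Fb_zero (ε : ℕ) (b : ℕ → ℤ) : Fb ε b 0 = b := by
  funext i
  unfold Fb
  by_cases hi : i = 0
  · rw [if_pos hi, hi]
    simp
  · rw [if_neg hi]
    simp

lemma P_mk_increment (n : ℕ) (f : ℕ → ℤ) (j : ℕ) (hj : j < n)
    (hodd : Odd (f j)) (hbelow : ∀ i, i < j → Even (f i)) (hne : f 0 ≠ -1) :
    ruleOf (mk n f) = Rule.increment ∧
    P (mk n f) = mk n (fun i => if i = 0 then f 0 - 1
      else if i = j + 1 then f (j+1) + 1 else f i) := by
  have hmemd : f j ∈ (mk n f).dropLast := by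
    obtain ⟨n', rfl⟩ : ∃ n', n = n' + 1 := ⟨n - 1, by omega⟩
    rw [mk_dropLast]
    exact mk_mem n' f j (by omega)
  have hnotO : ¬ OverflowCond (mk n f) := by
    rintro ⟨-, h⟩
    exact (Int.not_odd_iff_even.mpr (h _ hmemd)) hodd
  have hmem : f j ∈ mk n f := mk_mem n f j (by omega)
  have hnotall : ¬ ∀ x ∈ mk n f, Even x := by
    intro h
    exact (Int.not_odd_iff_even.mpr (h _ hmem)) hodd
  have hnotH : ¬ HaltCond (mk n f) := fun h => hnotall h.1
  have hnotZ : ¬ ZeroCond (mk n f) := fun h => hnotall h.1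
  have hhead : (mk n f).headD 0 = f 0 := mk_headD n f 0
  have hrule : ruleOf (mk n f) = Rule.increment := by
    rw [ruleOf, if_neg hnotO, if_neg hnotH, if_neg hnotZ, if_neg (by rw [hhead]; exact hne)]
  refine ⟨hrule, ?_⟩
  have hfind : (mk n f).findIdx (fun x => x % 2 != 0) = j := by
    rw [List.findIdx_eq (by rw [mk_length]; omega)]
    constructor
    · rw [mk_getElem]
      have h2 : f j % 2 = 1 := Int.odd_iff.mp hodd
      simp [h2]
    · intro i hij
      rw [mk_getElem n f i (by rw [mk_length]; omega)]
      have h2 : f i % 2 = 0 := Int.even_iff.mp (hbelow i hij)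
      simp [h2]
  rw [P, hrule]
  simp only [hfind]
  rw [mk_getD n f (j+1) (by omega), hhead,
    mk_set n f (j+1) (f (j+1) + 1) (by omega),
    mk_set n _ 0 (f 0 - 1) (by omega)]
  apply mk_congr
  intro i _
  rw [Function.update_apply, Function.update_apply]

lemma run (n Jmax T ε : ℕ) (hε : ε ≤ 1) (b : ℕ → ℤ)
    (hJn : Jmax + 1 ≤ n)
    (hb0 : Odd (b 0 + ε)) (hb1 : Even (b 1 + ε))
    (hbi : ∀ i, 2 ≤ i → i ≤ Jmax → Even (b i))
    (hT : ∀ m, m < T → ¬ (2^(Jmax+1) ∣ m + 1 + ε))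
    (hne : ∀ m, m < T → (b 0 : ℤ) - m ≠ -1) :
    (∀ m, m < T → ruleOf (mk n (Fb ε b m)) = Rule.increment ∧
        P (mk n (Fb ε b m)) = mk n (Fb ε b (m+1))) ∧
    (∀ m, m ≤ T → P^[m] (mk n b) = mk n (Fb ε b m)) := by
  have key : ∀ m, m < T → ruleOf (mk n (Fb ε b m)) = Rule.increment ∧
      P (mk n (Fb ε b m)) = mk n (Fb ε b (m+1)) := by
    intro m hm
    obtain ⟨j, q', hq'odd, hfac⟩ := Nat.exists_eq_two_pow_mul_odd (n := m + 1 + ε) (by omega)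
    obtain ⟨q, rfl⟩ := hq'odd
    have hfac' : (m + ε) + 1 = 2^j * (2*q+1) := by omega
    have hjJ : j ≤ Jmax := by
      by_contra h
      exact hT m hm (dvd_trans (pow_dvd_pow 2 (by omega)) ⟨2*q+1, hfac⟩)
    have hcast : ((m : ℤ) + ε) = ((m + ε : ℕ) : ℤ) := by push_cast; ring
    -- parity of the pivot entry
    have hodd : Odd (Fb ε b m j) := by
      rcases Nat.eq_zero_or_pos j with hj0 | hjpos
      · subst hj0
        have hMe : Even (m + ε) := ⟨q, by simp at hfac'; omega⟩
        unfold Fb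
        rw [if_pos rfl]
        have h1 : (b 0 : ℤ) - m = (b 0 + ε) - ((m + ε : ℕ) : ℤ) := by push_cast; ring
        rw [h1]
        exact hb0.sub_even ((Int.even_coe_nat _).mpr hMe)
      · unfold Fb
        rw [if_neg (by omega)]
        rcases Nat.lt_or_ge j 2 with hj1 | hj2
        · -- j = 1
          have hj : j = 1 := by omega
          subst hj
          have hg : g 1 (m + ε) = 2*q+1 := g_odd 0 (m+ε) q (by simpa using hfac')
          have hg1ε : (g 1 ε : ℤ) = ε := by
            interval_cases ε <;> simp [g]
          rw [hg, hg1ε]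
          have h2 : b 1 + (((2*q+1 : ℕ) : ℤ) - (ε : ℤ))
              = (b 1 + ε) + (2*(q:ℤ)+1) - 2*(ε:ℤ) := by push_cast; ring
          rw [h2]
          exact (hb1.add_odd ⟨q, by ring⟩).sub_even ⟨ε, by ring⟩
        · -- j ≥ 2
          have hgε : g j ε = 0 := g_eps_zero j hj2 ε hε
          obtain ⟨j', rfl⟩ : ∃ j', j = j' + 1 := ⟨j - 1, by omega⟩
          have hg : g (j'+1) (m+ε) = 2*q+1 := g_odd j' (m+ε) q hfac'
          rw [hg, hgε]
          have h2 : b (j'+1) + (((2*q+1 : ℕ) : ℤ) - ((0:ℕ) : ℤ))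
              = b (j'+1) + (2*(q:ℤ)+1) := by push_cast; ring
          rw [h2]
          exact (hbi (j'+1) hj2 hjJ).add_odd ⟨q, by ring⟩
    -- entries below the pivot are even
    have hbelow : ∀ i, i < j → Even (Fb ε b m i) := by
      intro i hij
      have hdvd : (2:ℕ)^(i+1) ∣ (m + ε) + 1 := by
        rw [hfac']
        exact dvd_mul_of_dvd_left (pow_dvd_pow 2 (by omega)) _
      obtain ⟨t, ht⟩ := hdvd
      rcases Nat.eq_zero_or_pos i with hi0 | hipos
      · subst hi0
        have hMo : Odd (m + ε) := by
          have ht' : m + ε + 1 = 2*t := by simpa using ht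
          exact ⟨t - 1, by omega⟩
        unfold Fb
        rw [if_pos rfl]
        have h1 : (b 0 : ℤ) - m = (b 0 + ε) - ((m + ε : ℕ) : ℤ) := by push_cast; ring
        rw [h1]
        exact hb0.sub_odd ((Int.odd_coe_nat _).mpr hMo)
      · unfold Fb
        rw [if_neg (by omega)]
        obtain ⟨i', rfl⟩ : ∃ i', i = i' + 1 := ⟨i - 1, by omega⟩
        have hgev : Even (g (i'+1) (m+ε)) := g_even i' (m+ε) t (by exact_mod_cast ht)
        have hgevZ : Even ((g (i'+1) (m+ε) : ℕ) : ℤ) := (Int.even_coe_nat _).mpr hgev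
        rcases Nat.lt_or_ge (i'+1) 2 with hi1 | hi2
        · -- i = 1
          have hi'0 : i' = 0 := by omega
          subst hi'0
          have hg1ε : (g 1 ε : ℤ) = ε := by
            interval_cases ε <;> simp [g]
          rw [hg1ε]
          have h2 : b 1 + (((g 1 (m+ε) : ℕ) : ℤ) - (ε : ℤ))
              = (b 1 + ε) + ((g 1 (m+ε) : ℕ) : ℤ) - 2*(ε:ℤ) := by push_cast; ring
          rw [h2]
          exact (hb1.add hgevZ).sub ⟨ε, by ring⟩
        · -- i ≥ 2
          have hgε : g (i'+1) ε = 0 := g_eps_zero (i'+1) hi2 ε hε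
          rw [hgε]
          have h2 : b (i'+1) + (((g (i'+1) (m+ε) : ℕ) : ℤ) - ((0:ℕ) : ℤ))
              = b (i'+1) + ((g (i'+1) (m+ε) : ℕ) : ℤ) := by push_cast; ring
          rw [h2]
          exact (hbi (i'+1) hi2 (by omega)).add hgevZ
    have hne0 : Fb ε b m 0 ≠ -1 := by
      unfold Fb
      rw [if_pos rfl]
      exact hne m hm
    obtain ⟨hrule, hP⟩ := P_mk_increment n (Fb ε b m) j (by omega) hodd hbelow hne0
    refine ⟨hrule, ?_⟩
    rw [hP]
    apply mk_congr
    intro i _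
    by_cases h0 : i = 0
    · subst h0
      rw [if_pos rfl]
      unfold Fb
      rw [if_pos rfl, if_pos rfl]
      push_cast
      ring
    · rw [if_neg h0]
      obtain ⟨i', rfl⟩ : ∃ i', i = i' + 1 := ⟨i - 1, by omega⟩
      have hstep : g (i'+1) ((m+1) + ε) = g (i'+1) (m + ε) + if i' = j then 1 else 0 := by
        have h1 : (m+1) + ε = ((m + ε) + 1) := by omega
        rw [h1]
        exact g_succ i' (m+ε) j q hfac'
      by_cases h1 : i' + 1 = j + 1
      · have hi'j : i' = j := by omega
        subst hi'j
        rw [if_pos h1]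
        unfold Fb
        rw [if_neg h0, if_neg h0, hstep, if_pos rfl]
        push_cast
        ring
      · have hi'j : ¬ (i' = j) := by omega
        rw [if_neg h1]
        unfold Fb
        rw [if_neg h0, if_neg h0, hstep, if_neg hi'j]
        push_cast
        ring
  refine ⟨key, ?_⟩
  intro m hmT
  induction m with
  | zero => rw [Function.iterate_zero_apply, Fb_zero]
  | succ m ih =>
    rw [Function.iterate_succ_apply', ih (by omega)]
    exact (key m (by omega)).2

lemma even_two_pow_int (t : ℕ) (h : 1 ≤ t) : Even ((2:ℤ)^t) := by
  obtain ⟨s, rfl⟩ : ∃ s, t = s + 1 := ⟨t - 1, by omega⟩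
  exact ⟨2^s, by rw [pow_succ]; ring⟩

lemma entry_eq_getElem (S : State) (i : ℕ) (h : i < S.length) : entry S i = S[i] := by
  rw [entry, List.getD_eq_getElem?_getD, List.getElem?_eq_getElem h]
  rfl

lemma headD_eq_entry (S : State) (h : S ≠ []) : S.headD 0 = entry S 0 := by
  cases S with
  | nil => exact absurd rfl h
  | cons a l => rfl

lemma getLastD_eq_entry (S : State) (h : S ≠ []) (d : ℤ) :
    S.getLastD d = entry S (S.length - 1) := by
  have hlt : S.length - 1 < S.length := by
    have : S.length ≠ 0 := fun h0 => h (List.length_eq_zero_iff.mp h0)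
    omega
  rw [List.getLastD_eq_getLast?, List.getLast?_eq_getElem?,
    List.getElem?_eq_getElem hlt, entry_eq_getElem S _ hlt]
  rfl

/-- The state reached from `E''` after the initial Zero rule. -/
def bf (k : ℕ) : ℕ → ℤ := fun j =>
  if j = 0 then 2^(2*k+1) - 5
  else if j = 1 then 3*2^(2*k)
  else if j ≤ 2*k then 3*2^(2*k-j+1) - 2 + 2*((j % 2 : ℕ) : ℤ)
  else if j = 2*k+1 then 3 else 0

/-- The state reached after the Halve rule. -/
def cf (k : ℕ) : ℕ → ℤ := fun i =>
  if i = 0 then 2^(2*k+2) - 2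
  else if i = 1 then 2^(2*k+1) - 3
  else if i ≤ 2*k-1 then 2^(2*k-i+2) - 2 + 2*(((i+1) % 2 : ℕ) : ℤ)
  else if i = 2*k then 4 else 0

section MainSteps

variable (k : ℕ) (E'' : State)

lemma zero_step (hk : 1 ≤ k)
    (hlen : E''.length = 2 * k + 2)
    (h0 : entry E'' 0 = (2 : ℤ) ^ (2 * k + 1) - 4)
    (h1 : entry E'' 1 = 3 * (2 : ℤ) ^ (2 * k))
    (hj : ∀ j, 2 ≤ j → j ≤ 2 * k →
      entry E'' j = 3 * (2 : ℤ) ^ (2 * k - j + 1) - 2 + 2 * ((j % 2 : ℕ) : ℤ))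
    (htop : entry E'' (2 * k + 1) = 2) :
    ruleOf E'' = Rule.zero ∧ P E'' = mk (2*k+3) (bf k) := by
  have hnil : E'' ≠ [] := by
    intro h
    rw [h] at hlen
    simp at hlen
  have hEv : ∀ x ∈ E'', Even x := by
    intro x hx
    rw [List.mem_iff_getElem] at hx
    obtain ⟨i, hi, rfl⟩ := hx
    rw [← entry_eq_getElem _ _ hi]
    rw [hlen] at hi
    rcases Nat.eq_zero_or_pos i with h | _
    · subst h
      rw [h0]
      exact (even_two_pow_int _ (by omega)).sub ⟨2, by norm_num⟩
    · by_cases hi1 : i = 1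
      · subst hi1
        rw [h1]
        exact (even_two_pow_int _ (by omega)).mul_left 3
      · by_cases hi2 : i ≤ 2*k
        · rw [hj i (by omega) hi2]
          exact (((even_two_pow_int _ (by omega)).mul_left 3).sub ⟨1, by norm_num⟩).add
            ⟨((i % 2 : ℕ) : ℤ), by ring⟩
        · have : i = 2*k+1 := by omega
          subst this
          rw [htop]
          exact ⟨1, by norm_num⟩
  have hlast : ∀ d : ℤ, E''.getLastD d = 2 := by
    intro d
    rw [getLastD_eq_entry E'' hnil d, hlen]
    simpa using htop
  have hO : ¬ OverflowCond E'' := by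
    rintro ⟨hodd, -⟩
    rw [leftmost, hlast 0] at hodd
    exact (Int.not_odd_iff_even.mpr ⟨1, by norm_num⟩) hodd
  have hH : ¬ HaltCond E'' := by
    rintro ⟨-, h2, -⟩
    rw [hlast 1] at h2
    norm_num at h2
  have hrule : ruleOf E'' = Rule.zero := by
    rw [ruleOf, if_neg hO, if_neg hH, if_pos ⟨hEv, hH⟩]
  refine ⟨hrule, ?_⟩
  rw [P, hrule]
  have hhd : E''.headD 0 = (2 : ℤ) ^ (2 * k + 1) - 4 := by
    rw [headD_eq_entry E'' hnil, h0]
  have hlm : leftmost E'' = 2 := hlast 0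
  rw [hhd, hlm, hlen]
  apply List.ext_getElem
  · simp [mk_length, hlen]
  · intro i hL hR
    rw [mk_length] at hR
    have hiL : i < 2*k + 4 := by omega
    rw [mk_getElem _ _ _ (by rw [mk_length]; omega)]
    rw [List.getElem_append]
    by_cases hin : i < 2*k+2
    · rw [dif_pos (by simpa [hlen] using hin)]
      rw [List.getElem_set, List.getElem_set]
      by_cases hi21 : 2*k+2-1 = i
      · have : i = 2*k+1 := by omega
        rw [if_pos hi21]
        subst this
        unfold bf
        rw [if_neg (by omega), if_neg (by omega), if_neg (by omega), if_pos rfl]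
        norm_num
      · rw [if_neg hi21]
        by_cases h00 : 0 = i
        · rw [if_pos h00]
          subst h00
          unfold bf
          rw [if_pos rfl]
          ring
        · rw [if_neg h00]
          rw [← entry_eq_getElem _ _ (by omega)]
          by_cases hi1 : i = 1
          · subst hi1
            rw [h1]
            unfold bf
            rw [if_neg (by omega), if_pos rfl]
          · by_cases hi2 : i ≤ 2*k
            · rw [hj i (by omega) hi2]
              unfold bf
              rw [if_neg (by omega), if_neg hi1, if_pos hi2]
            · omega
    · rw [dif_neg (by simpa [hlen] using hin)]
      unfold bf
      rw [if_neg (by omega), if_neg (by omega), if_neg (by omega), if_neg (by omega)]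
      have hi23 : i = 2*k+2 ∨ i = 2*k+3 := by omega
      rcases hi23 with rfl | rfl <;> simp [hlen]

end MainSteps

section Evals

variable (k : ℕ)

lemma gA_1 (hk : 1 ≤ k) : g 1 (2^(2*k+1) - 4) = 2^(2*k) - 2 := by
  have e1 : (2:ℕ)^(2*k+1) = 2^(2*k)*2 := pow_succ 2 (2*k)
  have e2 : (4:ℕ) ≤ 2^(2*k) := by
    calc (4:ℕ) = 2^2 := by norm_num
    _ ≤ 2^(2*k) := Nat.pow_le_pow_right (by norm_num) (by omega)
  have := g_eval 0 (2^(2*k+1) - 4) (2^(2*k) - 2) 1 (by norm_num; omega) (by norm_num)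
  simpa using this

lemma gA_2 (hk : 1 ≤ k) : g 2 (2^(2*k+1) - 4) = 2^(2*k-1) - 1 := by
  have e1 : (2:ℕ)^(2*k+1) = 2^(2*k-1)*4 := by
    rw [show 2*k+1 = (2*k-1)+2 by omega, pow_add]
    norm_num
  have e2 : (2:ℕ) ≤ 2^(2*k-1) := by
    calc (2:ℕ) = 2^1 := by norm_num
    _ ≤ 2^(2*k-1) := Nat.pow_le_pow_right (by norm_num) (by omega)
  have := g_eval 1 (2^(2*k+1) - 4) (2^(2*k-1) - 1) 2 (by norm_num; omega) (by norm_num)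
  simpa using this

lemma gA_mid (i : ℕ) (h2 : 2 ≤ i) (h2k : i ≤ 2*k) :
    g (i+1) (2^(2*k+1) - 4) = 2^(2*k-i) := by
  have e1 : (2:ℕ)^(i+1) * 2^(2*k-i) = 2^(2*k+1) := by
    rw [← pow_add]
    congr 1
    omega
  have e2 : (4:ℕ) ≤ 2^i := by
    calc (4:ℕ) = 2^2 := by norm_num
    _ ≤ 2^i := Nat.pow_le_pow_right (by norm_num) h2
  have e3 : (2:ℕ)^(i+1) = 2^i*2 := pow_succ 2 i
  have e4 : (4:ℕ) ≤ 2^(2*k+1) := le_trans e2 (Nat.pow_le_pow_right (by norm_num) (by omega))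
  exact g_eval i _ (2^(2*k-i)) (2^i - 4) (by omega) (by omega)

lemma gA_top (i : ℕ) (h : 2*k+1 ≤ i) : g (i+1) (2^(2*k+1) - 4) = 0 := by
  apply g_small
  have e1 : (2:ℕ)^(2*k+1) ≤ 2^i := Nat.pow_le_pow_right (by norm_num) h
  have e3 : (2:ℕ)^(i+1) = 2^i*2 := pow_succ 2 i
  have e4 : (1:ℕ) ≤ 2^(2*k+1) := Nat.one_le_two_pow
  omega

lemma gM2 (i : ℕ) (h : i ≤ 2*k+1) : g (i+1) (2^(2*k+2) - 1) = 2^(2*k+1-i) := by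
  have e1 : (2:ℕ)^(i+1) * 2^(2*k+1-i) = 2^(2*k+2) := by
    rw [← pow_add]
    congr 1
    omega
  have e2 : (1:ℕ) ≤ 2^i := Nat.one_le_two_pow
  have e3 : (2:ℕ)^(i+1) = 2^i*2 := pow_succ 2 i
  have e4 : (1:ℕ) ≤ 2^(2*k+2) := Nat.one_le_two_pow
  exact g_eval i _ (2^(2*k+1-i)) (2^i - 1) (by omega) (by omega)

lemma cast_pow_sub (t c : ℕ) (h : c ≤ 2^t) : ((2^t - c : ℕ) : ℤ) = 2^t - c := by
  rw [Nat.cast_sub h]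
  push_cast
  ring

lemma halve_step (hk : 1 ≤ k) :
    ruleOf (mk (2*k+3) (Fb 0 (bf k) (2^(2*k+1) - 4))) = Rule.halve ∧
    P (mk (2*k+3) (Fb 0 (bf k) (2^(2*k+1) - 4))) = mk (2*k+2) (cf k) := by
  have h4 : (4:ℕ) ≤ 2^(2*k+1) := by
    calc (4:ℕ) = 2^2 := by norm_num
    _ ≤ 2^(2*k+1) := Nat.pow_le_pow_right (by norm_num) (by omega)
  have hcA : ((2^(2*k+1) - 4 : ℕ) : ℤ) = 2^(2*k+1) - 4 := cast_pow_sub (2*k+1) 4 h4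
  have h0v : Fb 0 (bf k) (2^(2*k+1) - 4) 0 = -1 := by
    unfold Fb bf
    rw [if_pos rfl, if_pos rfl, hcA]
    ring
  have hleft : Fb 0 (bf k) (2^(2*k+1) - 4) (2*k+3) = 0 := by
    unfold Fb bf
    rw [if_neg (by omega), if_neg (by omega), if_neg (by omega), if_neg (by omega),
      if_neg (by omega)]
    simp only [Nat.add_zero]
    rw [show (2*k+3) = (2*k+2)+1 by omega, gA_top k (2*k+2) (by omega), g_zero]
    norm_num
  have hmem0 : Fb 0 (bf k) (2^(2*k+1) - 4) 0 ∈ mk (2*k+3) (Fb 0 (bf k) (2^(2*k+1) - 4)) :=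
    mk_mem _ _ 0 (by omega)
  have hnotall : ¬ ∀ x ∈ mk (2*k+3) (Fb 0 (bf k) (2^(2*k+1) - 4)), Even x := by
    intro h
    have := h _ hmem0
    rw [h0v] at this
    obtain ⟨c, hc⟩ := this
    omega
  have hO : ¬ OverflowCond (mk (2*k+3) (Fb 0 (bf k) (2^(2*k+1) - 4))) := by
    rintro ⟨hodd, -⟩
    rw [leftmost, mk_getLastD, hleft] at hodd
    obtain ⟨c, hc⟩ := hodd
    omega
  have hH : ¬ HaltCond (mk (2*k+3) (Fb 0 (bf k) (2^(2*k+1) - 4))) := fun h => hnotall h.1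
  have hZ : ¬ ZeroCond (mk (2*k+3) (Fb 0 (bf k) (2^(2*k+1) - 4))) := fun h => hnotall h.1
  have hhead : (mk (2*k+3) (Fb 0 (bf k) (2^(2*k+1) - 4))).headD 0 = -1 := by
    rw [mk_headD, h0v]
  have hrule : ruleOf (mk (2*k+3) (Fb 0 (bf k) (2^(2*k+1) - 4))) = Rule.halve := by
    rw [ruleOf, if_neg hO, if_neg hH, if_neg hZ, if_pos hhead]
  refine ⟨hrule, ?_⟩
  rw [P, hrule]
  rw [show (2*k+3) = (2*k+2)+1 by omega, mk_tail]
  apply mk_congr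
  intro i hi
  unfold Fb
  rw [if_neg (by omega)]
  rw [g_zero i]
  simp only [Nat.add_zero, Nat.zero_add]
  rcases Nat.eq_zero_or_pos i with rfl | hipos
  · -- i = 0
    unfold bf cf
    rw [if_neg (by omega), if_pos rfl, if_pos rfl]
    rw [gA_1 k hk]
    have h2 : (2:ℕ) ≤ 2^(2*k) := by
      calc (2:ℕ) = 2^1 := by norm_num
      _ ≤ 2^(2*k) := Nat.pow_le_pow_right (by norm_num) (by omega)
    rw [cast_pow_sub (2*k) 2 h2]
    have e : (2:ℤ)^(2*k+2) = 2^(2*k)*4 := by rw [pow_add]; norm_num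
    rw [e]
    push_cast
    ring
  · by_cases hi1 : i = 1
    · subst hi1
      unfold bf cf
      rw [if_neg (by omega), if_neg (by omega), if_pos (by omega),
        if_neg (by omega), if_pos rfl]
      rw [gA_2 k hk]
      have h2 : (1:ℕ) ≤ 2^(2*k-1) := Nat.one_le_two_pow
      rw [cast_pow_sub (2*k-1) 1 h2]
      have e0 : 2*k-2+1 = 2*k-1 := by omega
      rw [e0]
      have e : (2:ℤ)^(2*k+1) = 2^(2*k-1)*4 := by
        rw [show 2*k+1 = (2*k-1)+2 by omega, pow_add]
        norm_num
      rw [e]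
      push_cast
      ring
    · by_cases hi2 : i ≤ 2*k-1
      · -- 2 ≤ i ≤ 2k-1
        obtain ⟨i', rfl⟩ : ∃ i', i = i' + 1 := ⟨i - 1, by omega⟩
        unfold bf cf
        rw [if_neg (by omega), if_neg (by omega), if_pos (by omega),
          if_neg (by omega), if_neg (by omega), if_pos hi2]
        rw [gA_mid k (i'+1) (by omega) (by omega)]
        have e0 : 2*k-(i'+1+1)+1 = 2*k-(i'+1) := by omega
        rw [e0]
        have e : (2:ℤ)^(2*k-(i'+1)+2) = 2^(2*k-(i'+1))*4 := by rw [pow_add]; norm_num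
        rw [e]
        push_cast
        ring
      · by_cases hi3 : i = 2*k
        · subst hi3
          unfold bf cf
          rw [if_neg (by omega), if_neg (by omega), if_neg (by omega), if_pos rfl,
            if_neg (by omega), if_neg (by omega), if_neg (by omega), if_pos rfl]
          rw [gA_mid k (2*k) (by omega) (by omega)]
          norm_num
        · -- i = 2k+1 or 2k+2
          unfold bf cf
          rw [if_neg (by omega), if_neg (by omega), if_neg (by omega), if_neg (by omega),
            if_neg (by omega), if_neg (by omega), if_neg hi2, if_neg hi3]
          obtain ⟨i', rfl⟩ : ∃ i', i = i' + 1 := ⟨i - 1, by omega⟩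
          rw [gA_top k (i'+1) (by omega)]
          norm_num

end Evals

/-- The final state as an entry function. -/
def dfin (k : ℕ) : ℕ → ℤ := fun i =>
  if i = 0 then 0
  else if i = 1 then 2^(2*k+2) - 4
  else if i ≤ 2*k+2 then 2^(2*k+3-i) - 2*((i % 2 : ℕ) : ℤ) else 0

lemma mk_append_two (n : ℕ) (f : ℕ → ℤ) (x y : ℤ) :
    mk n f ++ [x, y] = mk (n+2) (fun i => if i ≤ n then f i else if i = n+1 then x else y) := by
  have h1 : mk (n+2) (fun i => if i ≤ n then f i else if i = n+1 then x else y)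
      = ((List.range (n+1)).map (fun i => if i ≤ n then f i else if i = n+1 then x else y))
        ++ [x, y] := by
    rw [mk, show n+2+1 = (n+2)+1 from rfl, List.range_succ,
      show n+2 = (n+1)+1 from rfl, List.range_succ]
    rw [List.map_append, List.map_append]
    simp only [List.map_cons, List.map_nil]
    have e1 : ¬ (n+1 ≤ n) := by omega
    have e2 : ¬ (n+1+1 ≤ n) := by omega
    have e3 : ¬ (n+1+1 = n+1) := by omega
    simp only [e1, e2, e3, if_false, if_true, eq_self_iff_true, List.append_assoc]
    rfl
  rw [h1]
  congr 1
  rw [mk]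
  apply List.map_congr_left
  intro a ha
  rw [if_pos (by simpa [Nat.lt_succ_iff] using List.mem_range.mp ha)]

lemma Efinal_eq_mk (k : ℕ) : Efinal k = mk (2*k+3) (dfin k) := by
  apply List.ext_getElem
  · simp only [Efinal, mk_length, List.length_cons, List.length_append,
      List.length_map, List.length_range, List.length_nil]
    try omega
  · intro n h1 h2
    rw [mk_getElem]
    match n, h1 with
    | 0, h1 =>
      unfold dfin
      rw [if_pos rfl]
      rfl
    | 1, h1 =>
      unfold dfin
      rw [if_neg (by omega), if_pos rfl]
      rfl
    | (j+2), h1 =>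
      simp only [Efinal, List.getElem_cons_succ]
      rw [List.getElem_append]
      have hjlen : j < 2*k+4 - 2 := by
        have := h2
        rw [mk_length] at this
        omega
      by_cases hj : j < 2*k+1
      · rw [dif_pos (by simpa using hj)]
        rw [List.getElem_map, List.getElem_range]
        unfold dfin
        rw [if_neg (by omega), if_neg (by omega), if_pos (by omega)]
        rw [show 2*k+3-(j+2) = 2*k+1-j by omega, show (j+2)%2 = j%2 by omega]
      · have hj2 : j = 2*k+1 := by omega
        rw [dif_neg (by simpa using hj)]
        unfold dfin
        rw [if_neg (by omega), if_neg (by omega), if_neg (by omega)]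
        subst hj2
        simp

lemma overflow_step (k : ℕ) (hk : 1 ≤ k) :
    ruleOf (mk (2*k+2) (Fb 1 (cf k) (2^(2*k+2) - 2))) = Rule.overflow ∧
    P (mk (2*k+2) (Fb 1 (cf k) (2^(2*k+2) - 2))) = mk (2*k+3) (dfin k) := by
  have h2 : (2:ℕ) ≤ 2^(2*k+2) := by
    calc (2:ℕ) = 2^1 := by norm_num
    _ ≤ 2^(2*k+2) := Nat.pow_le_pow_right (by norm_num) (by omega)
  have hM : 2^(2*k+2) - 2 + 1 = 2^(2*k+2) - 1 := by omega
  have hval : ∀ i, i ≤ 2*k+1 → Fb 1 (cf k) (2^(2*k+2) - 2) i = dfin k i := by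
    intro i hi
    unfold Fb
    by_cases h0 : i = 0
    · subst h0
      rw [if_pos rfl]
      unfold cf dfin
      rw [if_pos rfl, if_pos rfl, cast_pow_sub (2*k+2) 2 h2]
      ring
    · rw [if_neg h0, hM]
      by_cases h1 : i = 1
      · subst h1
        have hg := gM2 k 0 (by omega)
        norm_num at hg
        rw [hg, g_one_one]
        unfold cf dfin
        rw [if_neg (by omega), if_pos rfl, if_neg (by omega), if_pos rfl]
        have e : (2:ℤ)^(2*k+2) = 2^(2*k+1)*2 := pow_succ 2 (2*k+1)
        rw [e]
        push_cast
        ring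
      · obtain ⟨i', rfl⟩ : ∃ i', i = i'+1 := ⟨i-1, by omega⟩
        have hi'1 : 1 ≤ i' := by omega
        rw [gM2 k i' (by omega), g_one i' hi'1]
        unfold cf dfin
        rw [if_neg h0, if_neg h1, if_neg h0, if_neg h1, if_pos (by omega : i'+1 ≤ 2*k+2)]
        by_cases c1 : i'+1 ≤ 2*k-1
        · rw [if_pos c1]
          rw [show 2*k-(i'+1)+2 = 2*k+1-i' by omega,
            show 2*k+3-(i'+1) = (2*k+1-i')+1 by omega, pow_succ]
          rcases Nat.even_or_odd i' with ⟨t, rfl⟩ | ⟨t, rfl⟩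
          · rw [show (t+t+1+1)%2 = 0 by omega, show (t+t+1)%2 = 1 by omega]
            push_cast
            ring
          · rw [show (2*t+1+1+1)%2 = 1 by omega, show (2*t+1+1)%2 = 0 by omega]
            push_cast
            ring
        · rw [if_neg c1]
          by_cases c2 : i'+1 = 2*k
          · rw [if_pos c2]
            rw [show 2*k+1-i' = 2 by omega, show 2*k+3-(i'+1) = 3 by omega,
              show (i'+1)%2 = 0 by omega]
            push_cast
            try norm_num
          · rw [if_neg c2]
            have c3 : i'+1 = 2*k+1 := by omega
            rw [show 2*k+1-i' = 1 by omega, show 2*k+3-(i'+1) = 2 by omega,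
              show (i'+1)%2 = 1 by omega]
            push_cast
            try norm_num
  have hleft : Fb 1 (cf k) (2^(2*k+2) - 2) (2*k+2) = 1 := by
    unfold Fb
    rw [if_neg (by omega), hM]
    rw [show 2*k+2 = (2*k+1)+1 by omega, gM2 k (2*k+1) (by omega), g_one (2*k+1) (by omega)]
    unfold cf
    rw [if_neg (by omega), if_neg (by omega), if_neg (by omega), if_neg (by omega)]
    rw [show 2*k+1-(2*k+1) = 0 by omega]
    norm_num
  have hO : OverflowCond (mk (2*k+2) (Fb 1 (cf k) (2^(2*k+2) - 2))) := by
    constructor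
    · rw [leftmost, mk_getLastD, hleft]
      exact ⟨0, by norm_num⟩
    · intro x hx
      rw [show 2*k+2 = (2*k+1)+1 by omega, mk_dropLast] at hx
      rw [List.mem_iff_getElem] at hx
      obtain ⟨i, hilen, rfl⟩ := hx
      rw [mk_getElem]
      have hile : i ≤ 2*k+1 := by
        rw [mk_length] at hilen
        omega
      rw [hval i hile]
      unfold dfin
      by_cases hi0 : i = 0
      · rw [if_pos hi0]
        exact ⟨0, by norm_num⟩
      · rw [if_neg hi0]
        by_cases hi1 : i = 1
        · rw [if_pos hi1]
          exact (even_two_pow_int _ (by omega)).sub ⟨2, by norm_num⟩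
        · rw [if_neg hi1, if_pos (by omega)]
          exact (even_two_pow_int _ (by omega)).sub ⟨((i % 2 : ℕ) : ℤ), by ring⟩
  have hrule : ruleOf (mk (2*k+2) (Fb 1 (cf k) (2^(2*k+2) - 2))) = Rule.overflow := by
    rw [ruleOf, if_pos hO]
  refine ⟨hrule, ?_⟩
  rw [P, hrule]
  rw [leftmost, mk_getLastD, hleft]
  rw [show 2*k+2 = (2*k+1)+1 by omega, mk_dropLast]
  rw [mk_append_two]
  rw [show 2*k+1+2 = 2*k+3 by omega]
  apply mk_congr
  intro i hi
  by_cases hile : i ≤ 2*k+1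
  · rw [if_pos hile]
    exact hval i hile
  · rw [if_neg hile]
    by_cases hi2 : i = 2*k+2
    · rw [if_pos hi2]
      unfold dfin
      rw [if_neg (by omega), if_neg (by omega), if_pos (by omega)]
      rw [hi2, show 2*k+3-(2*k+2) = 1 by omega, show (2*k+2)%2 = 0 by omega]
      norm_num
    · rw [if_neg hi2]
      unfold dfin
      rw [if_neg (by omega), if_neg (by omega), if_neg (by omega)]

/-- Let `E''` be the state with `ℓ(E'') = 2k+1` and entries
`a_0 = 2^{2k+1} - 4`, `a_1 = 3·2^{2k}`, `a_j = 3·2^{2k-j+1} - 2 + 2·(j mod 2)` for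
`j ∈ [2, 2k]`, `a_{2k+1} = 2`.  Then `E'' ↦ E_{k,final}` and the rules applied are, in order:
one Zero rule, `2^{2k+1} - 4` Increment rules, one Halve rule, `2^{2k+2} - 2` Increment
rules, and one Overflow rule. -/
theorem statement_16 (k : ℕ) (E'' : State)
    (hlen : E''.length = 2 * k + 2)
    (h0 : entry E'' 0 = (2 : ℤ) ^ (2 * k + 1) - 4)
    (h1 : entry E'' 1 = 3 * (2 : ℤ) ^ (2 * k))
    (hj : ∀ j, 2 ≤ j → j ≤ 2 * k →
      entry E'' j = 3 * (2 : ℤ) ^ (2 * k - j + 1) - 2 + 2 * ((j % 2 : ℕ) : ℤ))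
    (htop : entry E'' (2 * k + 1) = 2) :
    P^[(2 ^ (2 * k + 1) - 4) + (2 ^ (2 * k + 2) - 2) + 3] E'' = Efinal k ∧
    ruleOf E'' = Rule.zero ∧
    (∀ j, 1 ≤ j → j ≤ 2 ^ (2 * k + 1) - 4 → ruleOf (P^[j] E'') = Rule.increment) ∧
    ruleOf (P^[(2 ^ (2 * k + 1) - 4) + 1] E'') = Rule.halve ∧
    (∀ j, (2 ^ (2 * k + 1) - 4) + 2 ≤ j →
        j ≤ (2 ^ (2 * k + 1) - 4) + (2 ^ (2 * k + 2) - 2) + 1 →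
      ruleOf (P^[j] E'') = Rule.increment) ∧
    ruleOf (P^[(2 ^ (2 * k + 1) - 4) + (2 ^ (2 * k + 2) - 2) + 2] E'') = Rule.overflow := by
  rcases Nat.eq_zero_or_pos k with hk0 | hk
  · -- k = 0 : the hypotheses are contradictory
    exfalso
    subst hk0
    norm_num at h1 htop
    rw [h1] at htop
    norm_num at htop
  -- main case k ≥ 1
  have h4 : (4:ℕ) ≤ 2^(2*k+1) := by
    calc (4:ℕ) = 2^2 := by norm_num
    _ ≤ 2^(2*k+1) := Nat.pow_le_pow_right (by norm_num) (by omega)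
  have h2' : (2:ℕ) ≤ 2^(2*k+2) := by
    calc (2:ℕ) = 2^1 := by norm_num
    _ ≤ 2^(2*k+2) := Nat.pow_le_pow_right (by norm_num) (by omega)
  obtain ⟨hz_rule, hz_P⟩ := zero_step k E'' hk hlen h0 h1 hj htop
  -- hypotheses for the first increment run
  have hb0 : Odd (bf k 0 + ((0:ℕ):ℤ)) := by
    unfold bf
    rw [if_pos rfl]
    simp only [Nat.cast_zero, add_zero]
    exact (even_two_pow_int _ (by omega)).sub_odd ⟨2, by norm_num⟩
  have hb1 : Even (bf k 1 + ((0:ℕ):ℤ)) := by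
    unfold bf
    rw [if_neg (by omega), if_pos rfl]
    simp only [Nat.cast_zero, add_zero]
    exact (even_two_pow_int _ (by omega)).mul_left 3
  have hbi : ∀ i, 2 ≤ i → i ≤ 2*k → Even (bf k i) := by
    intro i hi2 hik
    unfold bf
    rw [if_neg (by omega), if_neg (by omega), if_pos hik]
    exact (((even_two_pow_int _ (by omega)).mul_left 3).sub ⟨1, by norm_num⟩).add
      ⟨((i % 2 : ℕ) : ℤ), by ring⟩
  have hT1 : ∀ m, m < 2^(2*k+1) - 4 → ¬ (2^(2*k+1) ∣ m + 1 + 0) := by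
    intro m hm hdvd
    have := Nat.le_of_dvd (by omega) hdvd
    omega
  have hne1 : ∀ m : ℕ, m < 2^(2*k+1) - 4 → bf k 0 - (m : ℤ) ≠ -1 := by
    intro m hm
    unfold bf
    rw [if_pos rfl]
    have hmz : (m:ℤ) < ((2^(2*k+1) - 4 : ℕ) : ℤ) := by exact_mod_cast hm
    rw [cast_pow_sub _ _ h4] at hmz
    push_cast at hmz
    intro hEq
    linarith
  obtain ⟨key1, iter1⟩ := run (2*k+3) (2*k) (2^(2*k+1) - 4) 0 (by omega) (bf k)
    (by omega) hb0 hb1 hbi hT1 hne1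
  obtain ⟨hh_rule, hh_P⟩ := halve_step k hk
  -- hypotheses for the second increment run
  have hb0' : Odd (cf k 0 + ((1:ℕ):ℤ)) := by
    unfold cf
    rw [if_pos rfl]
    simp only [Nat.cast_one]
    exact ((even_two_pow_int _ (by omega)).sub ⟨1, by norm_num⟩).add_one
  have hb1' : Even (cf k 1 + ((1:ℕ):ℤ)) := by
    unfold cf
    rw [if_neg (by omega), if_pos rfl]
    simp only [Nat.cast_one]
    exact ((even_two_pow_int _ (by omega)).sub_odd ⟨1, by norm_num⟩).add_one
  have hbi' : ∀ i, 2 ≤ i → i ≤ 2*k+1 → Even (cf k i) := by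
    intro i hi2 hik
    unfold cf
    rw [if_neg (by omega), if_neg (by omega)]
    by_cases c1 : i ≤ 2*k-1
    · rw [if_pos c1]
      exact ((even_two_pow_int _ (by omega)).sub ⟨1, by norm_num⟩).add
        ⟨(((i+1) % 2 : ℕ) : ℤ), by ring⟩
    · rw [if_neg c1]
      by_cases c2 : i = 2*k
      · rw [if_pos c2]
        exact ⟨2, by norm_num⟩
      · rw [if_neg c2]
        exact ⟨0, by norm_num⟩
  have hT2 : ∀ m, m < 2^(2*k+2) - 2 → ¬ (2^(2*k+1+1) ∣ m + 1 + 1) := by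
    intro m hm hdvd
    have h5 := Nat.le_of_dvd (by omega) hdvd
    rw [show 2*k+1+1 = 2*k+2 by omega] at h5
    omega
  have hne2 : ∀ m : ℕ, m < 2^(2*k+2) - 2 → cf k 0 - (m : ℤ) ≠ -1 := by
    intro m hm
    unfold cf
    rw [if_pos rfl]
    have hmz : (m:ℤ) < ((2^(2*k+2) - 2 : ℕ) : ℤ) := by exact_mod_cast hm
    rw [cast_pow_sub _ _ h2'] at hmz
    push_cast at hmz
    intro hEq
    linarith
  obtain ⟨key2, iter2⟩ := run (2*k+2) (2*k+1) (2^(2*k+2) - 2) 1 (by omega) (cf k)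
    (by omega) hb0' hb1' hbi' hT2 hne2
  obtain ⟨ho_rule, ho_P⟩ := overflow_step k hk
  -- trajectory bookkeeping
  have hf2 : P^[(2^(2*k+1) - 4) + 1] E'' = mk (2*k+3) (Fb 0 (bf k) (2^(2*k+1) - 4)) := by
    rw [Function.iterate_succ_apply, hz_P]
    exact iter1 _ le_rfl
  have hf3 : P^[(2^(2*k+1) - 4) + 2] E'' = mk (2*k+2) (cf k) := by
    rw [show (2^(2*k+1) - 4) + 2 = 1 + ((2^(2*k+1) - 4) + 1) by omega,
      Function.iterate_add_apply, hf2, Function.iterate_one, hh_P]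
  refine ⟨?_, hz_rule, ?_, ?_, ?_, ?_⟩
  · -- final state
    rw [show (2^(2*k+1) - 4) + (2^(2*k+2) - 2) + 3
        = 1 + ((2^(2*k+2) - 2) + ((2^(2*k+1) - 4) + 2)) by omega,
      Function.iterate_add_apply, Function.iterate_add_apply, hf3,
      iter2 _ le_rfl, Function.iterate_one, ho_P, Efinal_eq_mk]
  · -- first increment block
    intro j hj1 hjA
    obtain ⟨m, rfl⟩ : ∃ m, j = m + 1 := ⟨j - 1, by omega⟩
    rw [Function.iterate_succ_apply, hz_P, iter1 m (by omega)]
    exact (key1 m (by omega)).1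
  · -- halve
    rw [hf2]
    exact hh_rule
  · -- second increment block
    intro j hjlo hjhi
    obtain ⟨m, rfl⟩ : ∃ m, j = m + ((2^(2*k+1) - 4) + 2) := ⟨j - ((2^(2*k+1) - 4) + 2), by omega⟩
    rw [Function.iterate_add_apply, hf3, iter2 m (by omega)]
    exact (key2 m (by omega)).1
  · -- overflow
    rw [show (2^(2*k+1) - 4) + (2^(2*k+2) - 2) + 2
        = (2^(2*k+2) - 2) + ((2^(2*k+1) - 4) + 2) by omega,
      Function.iterate_add_apply, hf3, iter2 _ le_rfl]
    exact ho_rule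

end Skelet17
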